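/- Every symmetric digraph D satisfies lir(D) ≤ 2. -/

import Mathlib

/- A digraph on vertex set `V` is given by its finite arc set `E ⊆ V × V`
(arcs in both directions between two vertices are allowed, loops are excluded
via explicit hypotheses). -/

/-- The outdegree of a vertex. -/
def outdeg {V : Type*} [DecidableEq V] (E : Finset (V × V)) (v : V) : ℕ :=
  (E.filter fun a => a.1 = v).card

/-- The indegree of a vertex. -/
def indeg {V : Type*} [DecidableEq V] (E : Finset (V × V)) (v : V) : ℕ :=
  (E.filter fun a => a.2 = v).card

/-- The balanced degree of a vertex. -/
def bdeg {V : Type*} [DecidableEq V] (E : Finset (V × V)) (v : V) : ℤ :=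
  (outdeg E v : ℤ) - (indeg E v : ℤ)

/-- A digraph is weak locally irregular if the endpoints of every arc have
different outdegree-indegree pairs. -/
def WeakLI {V : Type*} [DecidableEq V] (E : Finset (V × V)) : Prop :=
  ∀ a ∈ E, (outdeg E a.1, indeg E a.1) ≠ (outdeg E a.2, indeg E a.2)

/-- A digraph is strong locally irregular if the endpoints of every arc have
different balanced degrees. -/
def StrongLI {V : Type*} [DecidableEq V] (E : Finset (V × V)) : Prop :=
  ∀ a ∈ E, bdeg E a.1 ≠ bdeg E a.2

/-- `lirLe E n` : the arcs of `E` admit a coloring with at most `n` colors in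
which every color class induces a weak locally irregular digraph. -/
def lirLe {V : Type*} [DecidableEq V] (E : Finset (V × V)) (n : ℕ) : Prop :=
  ∃ c : V × V → Fin n, ∀ i : Fin n, WeakLI (E.filter fun a => c a = i)

/-- `slirLe E n` : the arcs of `E` admit a coloring with at most `n` colors in
which every color class induces a strong locally irregular digraph. -/
def slirLe {V : Type*} [DecidableEq V] (E : Finset (V × V)) (n : ℕ) : Prop :=
  ∃ c : V × V → Fin n, ∀ i : Fin n, StrongLI (E.filter fun a => c a = i)

/-- The skeleton of a digraph: the simple graph obtained by replacing each arc
or pair of opposite arcs with a single edge. -/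
def skeleton {V : Type*} [DecidableEq V] (E : Finset (V × V)) : SimpleGraph V where
  Adj u v := u ≠ v ∧ ((u, v) ∈ E ∨ (v, u) ∈ E)
  symm := by
    constructor
    intro u v h
    exact ⟨h.1.symm, h.2.elim Or.inr Or.inl⟩
  loopless := by
    constructor
    intro v h
    exact h.1 rfl

/-- `E'` is an orientation of the simple graph `G`: its arcs lie on edges of `G`
and every edge of `G` receives exactly one direction. -/
def IsOrientationOf {V : Type*} [DecidableEq V] (E' : Finset (V × V))
    (G : SimpleGraph V) : Prop :=
  (∀ a ∈ E', G.Adj a.1 a.2) ∧ (∀ u v : V, G.Adj u v → ((u, v) ∈ E' ↔ (v, u) ∉ E'))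

/-- An outdegree-decreasing acyclic digraph: vertices can be linearly ordered so
that every arc goes forward and outdegrees are nonincreasing along the order. -/
def OutdegDecAcyclic {V : Type*} [DecidableEq V] (E : Finset (V × V)) : Prop :=
  ∃ r : V → ℕ, Function.Injective r ∧ (∀ a ∈ E, r a.1 ≤ r a.2) ∧
    ∀ u v : V, r u < r v → outdeg E v ≤ outdeg E u

/-- An indegree-increasing acyclic digraph: vertices can be linearly ordered so
that every arc goes backward and indegrees are nondecreasing along the order. -/
def IndegIncAcyclic {V : Type*} [DecidableEq V] (E : Finset (V × V)) : Prop :=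
  ∃ r : V → ℕ, Function.Injective r ∧ (∀ a ∈ E, r a.2 ≤ r a.1) ∧
    ∀ u v : V, r u ≤ r v → indeg E u ≤ indeg E v

section Aux
variable {V : Type*} [DecidableEq V]

/-- number of arcs of `E` from `w` into `T`. -/
def dIn (E : Finset (V × V)) (T : Finset V) (w : V) : ℕ :=
  (E.filter fun a => a.1 = w ∧ a.2 ∈ T).card

noncomputable def pick (E : Finset (V × V)) (T : Finset V) (h : T.Nonempty) : V :=
  (T.exists_max_image (fun w => dIn E T w) h).choose

lemma pick_mem (E : Finset (V × V)) (T : Finset V) (h : T.Nonempty) : pick E T h ∈ T :=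
  (T.exists_max_image (fun w => dIn E T w) h).choose_spec.1

lemma pick_max (E : Finset (V × V)) (T : Finset V) (h : T.Nonempty) :
    ∀ w ∈ T, dIn E T w ≤ dIn E T (pick E T h) :=
  (T.exists_max_image (fun w => dIn E T w) h).choose_spec.2

noncomputable def greedy (E : Finset (V × V)) (T : Finset V) : List V :=
  if h : T.Nonempty then pick E T h :: greedy E (T.erase (pick E T h)) else []
termination_by T.card
decreasing_by exact Finset.card_erase_lt_of_mem (pick_mem E T h)

lemma greedy_of_nonempty (E : Finset (V × V)) (T : Finset V) (h : T.Nonempty) :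
    greedy E T = pick E T h :: greedy E (T.erase (pick E T h)) := by
  rw [greedy]; simp [h]

lemma mem_greedy (E : Finset (V × V)) : ∀ (T : Finset V) (x : V), x ∈ greedy E T ↔ x ∈ T := by
  intro T
  induction T using Finset.strongInduction with
  | _ T ih =>
    intro x
    by_cases h : T.Nonempty
    · rw [greedy_of_nonempty E T h]
      simp only [List.mem_cons, ih _ (Finset.erase_ssubset (pick_mem E T h)), Finset.mem_erase]
      constructor
      · rintro (rfl | ⟨_, hx⟩)
        · exact pick_mem E T h
        · exact hx
      · intro hx
        by_cases hxm : x = pick E T h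
        · exact Or.inl hxm
        · exact Or.inr ⟨hxm, hx⟩
    · rw [greedy]; simp [h]
      intro hx; exact h ⟨x, hx⟩


/-- number of arcs from `w` to vertices of `T` later than `w` in the greedy order. -/
noncomputable def cnt (E : Finset (V × V)) (T : Finset V) (w : V) : ℕ :=
  (E.filter fun a => a.1 = w ∧ a.2 ∈ T ∧
    (greedy E T).idxOf w < (greedy E T).idxOf a.2).card

lemma key (E : Finset (V × V)) (hloop : ∀ v : V, (v, v) ∉ E)
    (hsym : ∀ u v : V, (u, v) ∈ E → (v, u) ∈ E) :
    ∀ (T : Finset V) (u v : V), (u, v) ∈ E → u ∈ T → v ∈ T →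
      (greedy E T).idxOf u < (greedy E T).idxOf v → cnt E T v < cnt E T u := by
  intro T
  induction T using Finset.strongInduction with
  | _ T ih =>
    intro u v huv hu hv hidx
    have hne : T.Nonempty := ⟨u, hu⟩
    set m := pick E T hne with hm
    have hL := greedy_of_nonempty E T hne
    rw [← hm] at hL
    have hvm : v ≠ m := by
      rintro rfl
      rw [hL, List.idxOf_cons_self] at hidx
      omega
    by_cases hum : u = m
    · -- base case: u is the head
      rw [hum] at huv hu ⊢
      have hcu : cnt E T m = dIn E T m := by
        unfold cnt dIn
        apply congrArg Finset.card
        apply Finset.filter_congr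
        intro a ha
        constructor
        · rintro ⟨h1, h2, _⟩; exact ⟨h1, h2⟩
        · rintro ⟨h1, h2⟩
          refine ⟨h1, h2, ?_⟩
          have ha2 : a.2 ≠ m := by
            rintro he
            exact hloop m (by have : a = (m, m) := Prod.ext h1 he; rwa [this] at ha)
          rw [hL, List.idxOf_cons_self, List.idxOf_cons_ne _ (Ne.symm ha2)]
          omega
      have hcv : cnt E T v < dIn E T v := by
        apply Finset.card_lt_card
        rw [Finset.ssubset_iff_of_subset]
        · refine ⟨(v, m), ?_, ?_⟩
          · exact Finset.mem_filter.2 ⟨hsym m v huv, rfl, hu⟩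
          · simp only [Finset.mem_filter]
            rintro ⟨-, -, -, hlt⟩
            rw [hL, List.idxOf_cons_self] at hlt
            omega
        · intro a ha
          simp only [Finset.mem_filter] at ha ⊢
          exact ⟨ha.1, ha.2.1, ha.2.2.1⟩
      calc cnt E T v < dIn E T v := hcv
        _ ≤ dIn E T m := pick_max E T hne v hv
        _ = cnt E T m := hcu.symm
    · -- inductive step
      have hss : T.erase m ⊂ T := Finset.erase_ssubset (pick_mem E T hne)
      have hu' : u ∈ T.erase m := Finset.mem_erase.2 ⟨hum, hu⟩
      have hv' : v ∈ T.erase m := Finset.mem_erase.2 ⟨hvm, hv⟩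
      have hidxu : (greedy E T).idxOf u = (greedy E (T.erase m)).idxOf u + 1 := by
        rw [hL, List.idxOf_cons_ne _ (Ne.symm hum)]
      have hidxv : (greedy E T).idxOf v = (greedy E (T.erase m)).idxOf v + 1 := by
        rw [hL, List.idxOf_cons_ne _ (Ne.symm hvm)]
      have hidx' : (greedy E (T.erase m)).idxOf u < (greedy E (T.erase m)).idxOf v := by
        omega
      have hcnt : ∀ w : V, w ≠ m → cnt E T w = cnt E (T.erase m) w := by
        intro w hw
        unfold cnt
        apply congrArg Finset.card
        apply Finset.filter_congr
        intro a ha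
        by_cases h2m : a.2 = m
        · constructor
          · rintro ⟨h1, h2, hlt⟩
            exfalso
            rw [hL, h2m, List.idxOf_cons_self, List.idxOf_cons_ne _ (Ne.symm hw)] at hlt
            omega
          · rintro ⟨h1, h2, hlt⟩
            exact absurd (Finset.mem_erase.1 h2).1 (not_not.2 h2m)
        · have e1 : (greedy E T).idxOf w = (greedy E (T.erase m)).idxOf w + 1 := by
            rw [hL, List.idxOf_cons_ne _ (Ne.symm hw)]
          have e2 : (greedy E T).idxOf a.2 = (greedy E (T.erase m)).idxOf a.2 + 1 := by
            rw [hL, List.idxOf_cons_ne _ (Ne.symm h2m)]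
          constructor
          · rintro ⟨h1, h2, hlt⟩
            exact ⟨h1, Finset.mem_erase.2 ⟨h2m, h2⟩, by omega⟩
          · rintro ⟨h1, h2, hlt⟩
            exact ⟨h1, (Finset.mem_erase.1 h2).2, by omega⟩
      rw [hcnt u hum, hcnt v hvm]
      exact ih _ hss u v huv hu' hv' hidx'

end Aux

theorem stmt13 {V : Type*} [DecidableEq V] (E : Finset (V × V))
    (hloop : ∀ v : V, (v, v) ∉ E)
    (hsym : ∀ u v : V, (u, v) ∈ E → (v, u) ∈ E) :
    lirLe E 2 := by
  classical
  set S : Finset V := E.image Prod.fst with hS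
  have hmemS : ∀ a ∈ E, a.1 ∈ S ∧ a.2 ∈ S := by
    intro a ha
    exact ⟨Finset.mem_image.2 ⟨a, ha, rfl⟩,
      Finset.mem_image.2 ⟨(a.2, a.1), hsym a.1 a.2 ha, rfl⟩⟩
  set r : V → ℕ := fun w => (greedy E S).idxOf w with hr
  have hrne : ∀ a ∈ E, r a.1 ≠ r a.2 := by
    intro a ha h
    have h1 : a.1 ∈ greedy E S := (mem_greedy E S a.1).2 (hmemS a ha).1
    have h2 : a.2 ∈ greedy E S := (mem_greedy E S a.2).2 (hmemS a ha).2
    have : a.1 = a.2 := (List.idxOf_inj h1).1 h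
    exact hloop a.1 (by have : a = (a.1, a.1) := Prod.ext rfl this.symm; rwa [this] at ha)
  set c : V × V → Fin 2 := fun a => if r a.1 < r a.2 then 0 else 1 with hc
  have hc0 : ∀ a, c a = 0 ↔ r a.1 < r a.2 := by
    intro a
    by_cases h : r a.1 < r a.2 <;> simp [hc, h]
  have hc1 : ∀ a ∈ E, (c a = 1 ↔ r a.2 < r a.1) := by
    intro a ha
    by_cases h : r a.1 < r a.2 <;> simp [hc, h]
    · omega
    · have := hrne a ha; omega
  -- outdegree in class 0 is cnt
  have hout0 : ∀ w, outdeg (E.filter fun a => c a = 0) w = cnt E S w := by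
    intro w
    unfold outdeg cnt
    rw [Finset.filter_filter]
    apply congrArg Finset.card
    apply Finset.filter_congr
    intro a ha
    rw [hc0 a]
    constructor
    · rintro ⟨hlt, h1⟩
      exact ⟨h1, (hmemS a ha).2, by rw [← h1]; exact hlt⟩
    · rintro ⟨h1, -, hlt⟩
      exact ⟨by rw [h1]; exact hlt, h1⟩
  -- indegree in class 1 is cnt
  have hin1 : ∀ w, indeg (E.filter fun a => c a = 1) w = cnt E S w := by
    intro w
    unfold indeg cnt
    rw [Finset.filter_filter]
    apply Finset.card_nbij' Prod.swap Prod.swap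
    · rintro ⟨x, y⟩ hxy
      simp only [Finset.mem_coe, Finset.mem_filter] at hxy ⊢
      obtain ⟨hmem, hc', h2⟩ := hxy
      have := (hc1 _ hmem).1 hc'
      refine ⟨hsym x y hmem, ?_, ?_, ?_⟩
      · simpa using h2
      · exact (hmemS (y, x) (hsym x y hmem)).2
      · simp only [Prod.swap] at *
        simp only [← h2] at *
        exact this
    · rintro ⟨x, y⟩ hxy
      simp only [Finset.mem_coe, Finset.mem_filter, Prod.swap_prod_mk] at hxy ⊢
      obtain ⟨hmem, h1, h2S, hlt⟩ := hxy
      subst h1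
      have hmem' : (y, x) ∈ E := hsym x y hmem
      exact ⟨hmem', (hc1 _ hmem').2 hlt, rfl⟩
    · intro a _; simp
    · intro a _; simp
  refine ⟨c, ?_⟩
  intro i
  fin_cases i
  · -- class 0
    show WeakLI (Finset.filter (fun a => c a = 0) E)
    intro a ha
    rw [Finset.mem_filter] at ha
    obtain ⟨haE, hca⟩ := ha
    have hlt : r a.1 < r a.2 := (hc0 a).1 hca
    have hk : cnt E S a.2 < cnt E S a.1 :=
      key E hloop hsym S a.1 a.2 haE (hmemS a haE).1 (hmemS a haE).2 hlt
    intro h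
    rw [Prod.mk.injEq] at h
    rw [hout0 a.1, hout0 a.2] at h
    omega
  · -- class 1
    show WeakLI (Finset.filter (fun a => c a = 1) E)
    intro a ha
    rw [Finset.mem_filter] at ha
    obtain ⟨haE, hca⟩ := ha
    have hlt : r a.2 < r a.1 := (hc1 a haE).1 hca
    have haE' : (a.2, a.1) ∈ E := hsym a.1 a.2 haE
    have hk : cnt E S a.1 < cnt E S a.2 :=
      key E hloop hsym S a.2 a.1 haE' (hmemS a haE).2 (hmemS a haE).1 hlt
    intro h
    rw [Prod.mk.injEq] at h
    rw [hin1 a.1, hin1 a.2] at h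
    omega
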